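/- Let (Ω,𝓕,ℙ) be a probability space and let u : [a,b] × Ω → ℝ be a jointly measurable random field whose realizations are almost surely continuous. For x ∈ [a,b], δ > 0 with x + δ ∈ [a,b], and σ ∈ {±1}, set p_σ(x,δ) = ℙ{σ·u(x) ≥ 0, σ·u(x+δ/2) ≤ 0, σ·u(x+δ) ≥ 0}, and assume there is a constant C₀ > 0 with p_σ(x,δ) ≤ C₀·δ³ for all σ ∈ {±1} and all admissible x, δ. Then for every interval I = [x₀, x₀+δ] ⊆ [a,b], the probability that I is not admissible for u(·,ω) is at most (8/3)·C₀·δ³. -/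

import Mathlib

open Set MeasureTheory

/-- A continuous function `v` has a *double crossover* on `[α, β]` if for some sign
`σ ∈ {+1, −1}` one has `σ·v(α) ≥ 0`, `σ·v((α+β)/2) ≤ 0` and `σ·v(β) ≥ 0`. -/
def DoubleCrossover (v : ℝ → ℝ) (α β : ℝ) : Prop :=
  ∃ σ : ℝ, (σ = 1 ∨ σ = -1) ∧
    0 ≤ σ * v α ∧ σ * v ((α + β) / 2) ≤ 0 ∧ 0 ≤ σ * v β

/-- The interval `[α, β]` is *admissible* for `v` if `v` has no double crossover on any
dyadic subinterval `[d_{n,k}, d_{n,k+1}]`, where `d_{n,k} = α + (β − α)·k/2^n`. -/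
def IntervalAdmissible (v : ℝ → ℝ) (α β : ℝ) : Prop :=
  ∀ n k : ℕ, k < 2 ^ n →
    ¬ DoubleCrossover v (α + (β - α) * k / 2 ^ n) (α + (β - α) * (k + 1) / 2 ^ n)

/-- If the double-crossover probabilities of the random field `u` on `[a, b]` satisfy
`p_σ(x, δ) ≤ C₀·δ³`, then for every interval `I = [x₀, x₀ + δ] ⊆ [a, b]` the probability
that `I` is not admissible is at most `(8/3)·C₀·δ³`. -/
theorem prob_interval_not_admissible
    (Ω : Type*) [MeasurableSpace Ω] (ℙ : Measure Ω) [IsProbabilityMeasure ℙ]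
    (a b : ℝ) (hab : a < b) (u : ℝ → Ω → ℝ)
    (hmeas : Measurable (Function.uncurry u))
    (hcont : ∀ᵐ ω ∂ℙ, ContinuousOn (fun x => u x ω) (Icc a b))
    (C₀ : ℝ) (hC₀ : 0 < C₀)
    (hp : ∀ σ : ℝ, (σ = 1 ∨ σ = -1) → ∀ x δ : ℝ, 0 < δ → a ≤ x → x + δ ≤ b →
      ℙ {ω | 0 ≤ σ * u x ω ∧ σ * u (x + δ / 2) ω ≤ 0 ∧ 0 ≤ σ * u (x + δ) ω} ≤
        ENNReal.ofReal (C₀ * δ ^ 3))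
    (x₀ δ : ℝ) (hδ : 0 < δ) (hx₀ : a ≤ x₀) (hx₀δ : x₀ + δ ≤ b) :
    ℙ {ω | ¬ IntervalAdmissible (fun x => u x ω) x₀ (x₀ + δ)} ≤
      ENNReal.ofReal (8 / 3 * C₀ * δ ^ 3) := by
  classical
  set E : ℝ → ℕ → ℕ → Set Ω := fun σ n k =>
    {ω | 0 ≤ σ * u (x₀ + δ * k / 2 ^ n) ω ∧
      σ * u (x₀ + δ * k / 2 ^ n + (δ / 2 ^ n) / 2) ω ≤ 0 ∧
      0 ≤ σ * u (x₀ + δ * k / 2 ^ n + δ / 2 ^ n) ω} with hEdef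
  have hE : ∀ σ : ℝ, (σ = 1 ∨ σ = -1) → ∀ n k : ℕ, k < 2 ^ n →
      ℙ (E σ n k) ≤ ENNReal.ofReal (C₀ * (δ / 2 ^ n) ^ 3) := by
    intro σ hσ n k hk
    have h2n : (0:ℝ) < 2 ^ n := by positivity
    apply hp σ hσ (x₀ + δ * k / 2 ^ n) (δ / 2 ^ n) (by positivity)
    · have : (0:ℝ) ≤ δ * k / 2 ^ n := by positivity
      linarith
    · have hk1 : ((k:ℝ) + 1) ≤ 2 ^ n := by exact_mod_cast hk
      have : δ * k / 2 ^ n + δ / 2 ^ n ≤ δ := by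
        rw [← add_div, div_le_iff₀ h2n]
        nlinarith
      linarith
  have hsub : {ω | ¬ IntervalAdmissible (fun x => u x ω) x₀ (x₀ + δ)} ⊆
      ⋃ n : ℕ, ⋃ k ∈ Finset.range (2 ^ n), (E 1 n k ∪ E (-1) n k) := by
    intro ω hω
    simp only [IntervalAdmissible] at hω
    push_neg at hω
    obtain ⟨n, k, hk, hdc⟩ := hω
    obtain ⟨σ, hσ, h1, h2, h3⟩ := hdc
    have e0 : x₀ + (x₀ + δ - x₀) * (k:ℝ) / 2 ^ n = x₀ + δ * k / 2 ^ n := by ring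
    have e2 : (x₀ + (x₀ + δ - x₀) * (k:ℝ) / 2 ^ n +
        (x₀ + (x₀ + δ - x₀) * ((k:ℝ) + 1) / 2 ^ n)) / 2
        = x₀ + δ * k / 2 ^ n + (δ / 2 ^ n) / 2 := by ring
    have e3 : x₀ + (x₀ + δ - x₀) * ((k:ℝ) + 1) / 2 ^ n
        = x₀ + δ * k / 2 ^ n + δ / 2 ^ n := by ring
    rw [e0] at h1
    rw [e2] at h2
    rw [e3] at h3
    refine Set.mem_iUnion.2 ⟨n, Set.mem_iUnion₂.2 ⟨k, Finset.mem_range.2 hk, ?_⟩⟩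
    rcases hσ with rfl | rfl
    · exact Or.inl ⟨h1, h2, h3⟩
    · exact Or.inr ⟨h1, h2, h3⟩
  have hnn : ∀ n : ℕ, (0:ℝ) ≤ 2 * (C₀ * δ ^ 3) * (1/4) ^ n := by
    intro n; positivity
  have hper : ∀ n : ℕ, ℙ (⋃ k ∈ Finset.range (2 ^ n), (E 1 n k ∪ E (-1) n k)) ≤
      ENNReal.ofReal (2 * (C₀ * δ ^ 3) * (1/4) ^ n) := by
    intro n
    have h2n : (0:ℝ) < 2 ^ n := by positivity
    calc ℙ (⋃ k ∈ Finset.range (2 ^ n), (E 1 n k ∪ E (-1) n k))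
        ≤ ∑ k ∈ Finset.range (2 ^ n), ℙ (E 1 n k ∪ E (-1) n k) :=
          measure_biUnion_finset_le _ _
      _ ≤ ∑ k ∈ Finset.range (2 ^ n),
            ENNReal.ofReal (2 * (C₀ * (δ / 2 ^ n) ^ 3)) := by
          refine Finset.sum_le_sum fun k hk => ?_
          have hk' := Finset.mem_range.1 hk
          calc ℙ (E 1 n k ∪ E (-1) n k) ≤ ℙ (E 1 n k) + ℙ (E (-1) n k) :=
                measure_union_le _ _
            _ ≤ ENNReal.ofReal (C₀ * (δ / 2 ^ n) ^ 3) +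
                ENNReal.ofReal (C₀ * (δ / 2 ^ n) ^ 3) :=
                add_le_add (hE 1 (Or.inl rfl) n k hk') (hE (-1) (Or.inr rfl) n k hk')
            _ = ENNReal.ofReal (2 * (C₀ * (δ / 2 ^ n) ^ 3)) := by
                rw [← ENNReal.ofReal_add (by positivity) (by positivity)]; ring_nf
      _ = (2 ^ n : ℕ) • ENNReal.ofReal (2 * (C₀ * (δ / 2 ^ n) ^ 3)) := by
          rw [Finset.sum_const, Finset.card_range]
      _ = ENNReal.ofReal ((2 ^ n : ℕ) * (2 * (C₀ * (δ / 2 ^ n) ^ 3))) := by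
          rw [nsmul_eq_mul, ← ENNReal.ofReal_natCast,
            ← ENNReal.ofReal_mul (by positivity)]
      _ = ENNReal.ofReal (2 * (C₀ * δ ^ 3) * (1/4) ^ n) := by
          congr 1
          push_cast
          have h4 : ((1:ℝ)/4) ^ n = 1 / ((2:ℝ) ^ n) ^ 2 := by
            rw [div_pow, one_pow, ← pow_mul, Nat.mul_comm, pow_mul]
            norm_num
          rw [h4]
          field_simp
  calc ℙ {ω | ¬ IntervalAdmissible (fun x => u x ω) x₀ (x₀ + δ)}
      ≤ ℙ (⋃ n : ℕ, ⋃ k ∈ Finset.range (2 ^ n), (E 1 n k ∪ E (-1) n k)) :=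
        measure_mono hsub
    _ ≤ ∑' n : ℕ, ℙ (⋃ k ∈ Finset.range (2 ^ n), (E 1 n k ∪ E (-1) n k)) :=
        measure_iUnion_le _
    _ ≤ ∑' n : ℕ, ENNReal.ofReal (2 * (C₀ * δ ^ 3) * (1/4) ^ n) :=
        ENNReal.tsum_le_tsum hper
    _ = ENNReal.ofReal (∑' n : ℕ, 2 * (C₀ * δ ^ 3) * (1/4) ^ n) := by
        rw [ENNReal.ofReal_tsum_of_nonneg hnn]
        exact (summable_geometric_of_lt_one (by norm_num) (by norm_num)).mul_left _
    _ = ENNReal.ofReal (8 / 3 * C₀ * δ ^ 3) := by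
        rw [tsum_mul_left, tsum_geometric_of_lt_one (by norm_num) (by norm_num)]
        norm_num
        ring_nf
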